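/- arXiv:2107.02144 — 10 statements merged into one kernel-verified Lean document; each statement's English description precedes it below -/
import Mathlib

section
/- Let A be a finite alphabet with |A| ≥ 2. Any code C ⊆ A³ that is unambiguous for the Diamond Network (i.e., for some functions f₁ : A → A and f₂ : A × A → A, the output sets Ω(x) = {(f₁(x₁'), f₂(x₂', x₃')) : (x₁',x₂',x₃') ∈ A³ differs from x in at most one coordinate} are pairwise disjoint for distinct codewords) must have minimum Hamming distance at least 3. -/
open Finset

/-- Hamming distance on triples. -/
def dH3 {A : Type*} [DecidableEq A] (x y : A × A × A) : ℕ :=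
  (if x.1 = y.1 then 0 else 1) + (if x.2.1 = y.2.1 then 0 else 1) +
    (if x.2.2 = y.2.2 then 0 else 1)

/-- The set of possible outputs at the terminal of the Diamond Network. -/
def Omega {A : Type*} [Fintype A] [DecidableEq A] (f₁ : A → A) (f₂ : A → A → A)
    (x : A × A × A) : Finset (A × A) :=
  (Finset.univ.filter fun x' : A × A × A => dH3 x' x ≤ 1).image
    fun x' => (f₁ x'.1, f₂ x'.2.1 x'.2.2)

/-- An outer code is unambiguous if output sets of distinct codewords are disjoint. -/
def Unambiguous {A : Type*} [Fintype A] [DecidableEq A] (f₁ : A → A) (f₂ : A → A → A)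
    (C : Finset (A × A × A)) : Prop :=
  ∀ x ∈ C, ∀ y ∈ C, x ≠ y → Disjoint (Omega f₁ f₂ x) (Omega f₁ f₂ y)

lemma mem_Omega_of_close {A : Type*} [Fintype A] [DecidableEq A] (f₁ : A → A) (f₂ : A → A → A)
    (x z : A × A × A) (h : dH3 z x ≤ 1) :
    (f₁ z.1, f₂ z.2.1 z.2.2) ∈ Omega f₁ f₂ x := by
  simp only [Omega, Finset.mem_image, Finset.mem_filter, Finset.mem_univ, true_and]
  exact ⟨z, h, rfl⟩

theorem stmt0 {A : Type*} [Fintype A] [DecidableEq A] (hA : 2 ≤ Fintype.card A)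
    (f₁ : A → A) (f₂ : A → A → A) (C : Finset (A × A × A))
    (hC : Unambiguous f₁ f₂ C) :
    ∀ x ∈ C, ∀ y ∈ C, x ≠ y → 3 ≤ dH3 x y := by
  intro x hx y hy hxy
  by_contra h
  push_neg at h
  have hdisj := hC x hx y hy hxy
  -- exhibit a point z within distance 1 of both x and y
  obtain ⟨z, hzx, hzy⟩ : ∃ z : A × A × A, dH3 z x ≤ 1 ∧ dH3 z y ≤ 1 := by
    by_cases h1 : x.1 = y.1
    · refine ⟨(x.1, y.2.1, x.2.2), ?_, ?_⟩
      · by_cases hc : y.2.1 = x.2.1 <;> simp [dH3, hc]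
      · by_cases hc : x.2.2 = y.2.2 <;> simp [dH3, h1, hc]
    · refine ⟨(y.1, x.2.1, x.2.2), ?_, ?_⟩
      · have h1' : ¬ (y.1 = x.1) := fun e => h1 e.symm
        simp [dH3, h1']
      · simp only [dH3, if_neg h1] at h
        by_cases hb : x.2.1 = y.2.1 <;> by_cases hc : x.2.2 = y.2.2 <;>
          simp [dH3, hb, hc] at h ⊢ <;> omega
  exact Finset.disjoint_left.mp hdisj
    (mem_Omega_of_close f₁ f₂ x z hzx) (mem_Omega_of_close f₁ f₂ y z hzy)
end

section
/- Let A be a finite alphabet, f₁ : A → A, f₂ : A × A → A, and let C ⊆ A³ be unambiguous for the Diamond Network with these functions. Then the projection π : A³ → A onto the first coordinate is injective on C. -/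
open Finset

theorem stmt1 {A : Type*} [Fintype A] [DecidableEq A]
    (f₁ : A → A) (f₂ : A → A → A) (C : Finset (A × A × A))
    (hC : Unambiguous f₁ f₂ C) :
    ∀ x ∈ C, ∀ y ∈ C, x.1 = y.1 → x = y := by
  intro x hx y hy h1
  by_contra hne
  have hd := hC x hx y hy hne
  have hmem : (f₁ x.1, f₂ x.2.1 y.2.2) ∈ Omega f₁ f₂ x ∩ Omega f₁ f₂ y := by
    simp only [Finset.mem_inter, Omega, Finset.mem_image, Finset.mem_filter,
      Finset.mem_univ, true_and]
    refine ⟨⟨(x.1, x.2.1, y.2.2), ?_, rfl⟩, ⟨(x.1, x.2.1, y.2.2), ?_, rfl⟩⟩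
    · simp [dH3]; split <;> simp
    · simp [dH3, h1]; split <;> simp
  rw [Finset.disjoint_left] at hd
  exact hd (Finset.mem_inter.mp hmem).1 (Finset.mem_inter.mp hmem).2
end

section
/- Let A be a finite alphabet, f₁ : A → A, f₂ : A × A → A, and let C ⊆ A³ be unambiguous for the Diamond Network with these functions. Then f₁ is injective on the set π(C) = {x₁ : (x₁,x₂,x₃) ∈ C} of first coordinates of codewords. -/
open Finset

theorem stmt2 {A : Type*} [Fintype A] [DecidableEq A]
    (f₁ : A → A) (f₂ : A → A → A) (C : Finset (A × A × A))
    (hC : Unambiguous f₁ f₂ C) :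
    ∀ x ∈ C, ∀ y ∈ C, f₁ x.1 = f₁ y.1 → x.1 = y.1 := by
  intro x hx y hy hf
  by_cases hxy : x = y
  · rw [hxy]
  · exfalso
    have hd := hC x hx y hy hxy
    have h1 : (f₁ x.1, f₂ x.2.1 y.2.2) ∈ Omega f₁ f₂ x := by
      simp only [Omega, mem_image, mem_filter, mem_univ, true_and]
      exact ⟨(x.1, x.2.1, y.2.2), by simp [dH3]; split <;> simp, rfl⟩
    have h2 : (f₁ x.1, f₂ x.2.1 y.2.2) ∈ Omega f₁ f₂ y := by
      simp only [Omega, mem_image, mem_filter, mem_univ, true_and]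
      exact ⟨(y.1, x.2.1, y.2.2), by simp [dH3]; split <;> simp, by simp [hf]⟩
    exact (Finset.disjoint_left.mp hd h1) h2
end

section
/- Let A be a finite alphabet, f₁ : A → A, f₂ : A × A → A, and let C ⊆ A³ be unambiguous for the Diamond Network with these functions. For x ∈ C define ω(x) = {f₂(x₂', x₃') : (x₁',x₂',x₃') ∈ A³ with dH((x₁',x₂',x₃'), x) ≤ 1}. Then there is at most one codeword x ∈ C with |ω(x)| = 1. -/
open Finset

/-- The set of possible symbols on the lower edge, over corrupted triples. -/
def omegaT {A : Type*} [Fintype A] [DecidableEq A] (f₂ : A → A → A) (x : A × A × A) :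
    Finset A :=
  (Finset.univ.filter fun x' : A × A × A => dH3 x' x ≤ 1).image fun x' => f₂ x'.2.1 x'.2.2

lemma mem_omegaT {A : Type*} [Fintype A] [DecidableEq A] (f₂ : A → A → A)
    (x x' : A × A × A) (h : dH3 x' x ≤ 1) : f₂ x'.2.1 x'.2.2 ∈ omegaT f₂ x := by
  exact mem_image.2 ⟨x', by simp [h], rfl⟩

lemma mem_Omega {A : Type*} [Fintype A] [DecidableEq A] (f₁ : A → A) (f₂ : A → A → A)
    (x x' : A × A × A) (h : dH3 x' x ≤ 1) :
    (f₁ x'.1, f₂ x'.2.1 x'.2.2) ∈ Omega f₁ f₂ x := by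
  exact mem_image.2 ⟨x', by simp [h], rfl⟩

theorem stmt3 {A : Type*} [Fintype A] [DecidableEq A]
    (f₁ : A → A) (f₂ : A → A → A) (C : Finset (A × A × A))
    (hC : Unambiguous f₁ f₂ C) :
    ∀ x ∈ C, ∀ y ∈ C, (omegaT f₂ x).card = 1 → (omegaT f₂ y).card = 1 → x = y := by
  intro x hx y hy hcx hcy
  by_contra hne
  obtain ⟨b, hb⟩ := Finset.card_eq_one.1 hcx
  obtain ⟨b', hb'⟩ := Finset.card_eq_one.1 hcy
  -- basic membership facts
  have hself : dH3 x x ≤ 1 := by simp [dH3]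
  have hxb : f₂ x.2.1 x.2.2 = b := by
    have := mem_omegaT f₂ x x hself
    rw [hb, Finset.mem_singleton] at this; exact this
  -- f₂ x.2.1 y.2.2 = b, changing third coord of x
  have h1 : dH3 (x.1, x.2.1, y.2.2) x ≤ 1 := by
    simp [dH3]; split_ifs <;> omega
  have hxb2 : f₂ x.2.1 y.2.2 = b := by
    have := mem_omegaT f₂ x (x.1, x.2.1, y.2.2) h1
    rw [hb, Finset.mem_singleton] at this; exact this
  -- f₂ x.2.1 y.2.2 = b', changing second coord of y
  have h2 : dH3 (y.1, x.2.1, y.2.2) y ≤ 1 := by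
    simp [dH3]; split_ifs <;> omega
  have hyb2 : f₂ x.2.1 y.2.2 = b' := by
    have := mem_omegaT f₂ y (y.1, x.2.1, y.2.2) h2
    rw [hb', Finset.mem_singleton] at this; exact this
  have hbb : b = b' := hxb2 ▸ hyb2
  -- common element of the Omegas
  have hmx : (f₁ x.1, f₂ x.2.1 x.2.2) ∈ Omega f₁ f₂ x := mem_Omega f₁ f₂ x x hself
  have h3 : dH3 (x.1, y.2.1, y.2.2) y ≤ 1 := by
    simp [dH3]; split_ifs <;> omega
  have hyb3 : f₂ y.2.1 y.2.2 = b' := by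
    have := mem_omegaT f₂ y (y.1, y.2.1, y.2.2) (by simp [dH3])
    rw [hb', Finset.mem_singleton] at this; exact this
  have hmy : (f₁ x.1, f₂ x.2.1 x.2.2) ∈ Omega f₁ f₂ y := by
    have := mem_Omega f₁ f₂ y (x.1, y.2.1, y.2.2) h3
    simpa [hyb3, hxb, hbb] using this
  exact Finset.disjoint_left.1 (hC x hx y hy hne) hmx hmy
end

section
/- Let A be a finite alphabet with |A| ≥ 2, f₁ : A → A, f₂ : A × A → A, and let C ⊆ A³ be unambiguous for the Diamond Network with these functions. Then |C|² + |C| − 1 ≤ |A|². -/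
open Finset

section Aux

variable {A : Type*} [Fintype A] [DecidableEq A] (f₁ : A → A) (f₂ : A → A → A)

lemma omega_mem1 (x : A × A × A) (a : A) :
    (f₁ a, f₂ x.2.1 x.2.2) ∈ Omega f₁ f₂ x := by
  simp only [Omega, mem_image, mem_filter, mem_univ, true_and]
  refine ⟨(a, x.2.1, x.2.2), ?_, rfl⟩
  simp only [dH3]
  split_ifs <;> simp_all

lemma omega_mem2 (x : A × A × A) (a : A) :
    (f₁ x.1, f₂ a x.2.2) ∈ Omega f₁ f₂ x := by
  simp only [Omega, mem_image, mem_filter, mem_univ, true_and]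
  refine ⟨(x.1, a, x.2.2), ?_, rfl⟩
  simp only [dH3]
  split_ifs <;> simp_all

lemma omega_mem3 (x : A × A × A) (a : A) :
    (f₁ x.1, f₂ x.2.1 a) ∈ Omega f₁ f₂ x := by
  simp only [Omega, mem_image, mem_filter, mem_univ, true_and]
  refine ⟨(x.1, x.2.1, a), ?_, rfl⟩
  simp only [dH3]
  split_ifs <;> simp_all

end Aux

theorem stmt6 {A : Type*} [Fintype A] [DecidableEq A] (hA : 2 ≤ Fintype.card A)
    (f₁ : A → A) (f₂ : A → A → A) (C : Finset (A × A × A))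
    (hC : Unambiguous f₁ f₂ C) :
    C.card ^ 2 + C.card - 1 ≤ Fintype.card A ^ 2 := by
  classical
  -- f₁ on first coordinates is injective on C
  have injA : ∀ x ∈ C, ∀ y ∈ C, f₁ x.1 = f₁ y.1 → x = y := by
    intro x hx y hy h
    by_contra hne
    have hd := hC x hx y hy hne
    have h1 : (f₁ x.1, f₂ x.2.1 y.2.2) ∈ Omega f₁ f₂ x := omega_mem3 f₁ f₂ x y.2.2
    have h2 : (f₁ x.1, f₂ x.2.1 y.2.2) ∈ Omega f₁ f₂ y := by
      rw [h]; exact omega_mem2 f₁ f₂ y x.2.1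
    exact (Finset.disjoint_left.mp hd h1) h2
  have hcard_img : C.card ≤ (univ.image f₁).card := by
    have h1 : (C.image fun x => f₁ x.1).card = C.card :=
      Finset.card_image_of_injOn (fun x hx y hy h => injA x hx y hy h)
    have h2 : (C.image fun x => f₁ x.1) ⊆ univ.image f₁ := by
      intro b hb
      simp only [mem_image, mem_univ, true_and] at hb ⊢
      obtain ⟨x, -, rfl⟩ := hb
      exact ⟨x.1, rfl⟩
    calc C.card = (C.image fun x => f₁ x.1).card := h1.symm
      _ ≤ (univ.image f₁).card := Finset.card_le_card h2
  -- the "row" inside each Omega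
  set S : (A × A × A) → Finset (A × A) :=
    fun x => (univ.image f₁).image (fun b => (b, f₂ x.2.1 x.2.2)) with hS
  have hS_sub : ∀ x, S x ⊆ Omega f₁ f₂ x := by
    intro x p hp
    simp only [hS, mem_image, mem_univ, true_and] at hp
    obtain ⟨b, ⟨a, rfl⟩, rfl⟩ := hp
    exact omega_mem1 f₁ f₂ x a
  have hS_card : ∀ x, (S x).card = (univ.image f₁).card := by
    intro x
    exact Finset.card_image_of_injective _ (fun b b' h => (Prod.ext_iff.mp h).1)
  -- degenerate codewords
  set Deg : (A × A × A) → Prop :=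
    fun x => ∀ a, f₂ a x.2.2 = f₂ x.2.1 x.2.2 ∧ f₂ x.2.1 a = f₂ x.2.1 x.2.2 with hDeg
  have hD1 : (C.filter Deg).card ≤ 1 := by
    rw [Finset.card_le_one]
    intro x hx y hy
    rw [mem_filter] at hx hy
    by_contra hne
    have hs : f₂ x.2.1 x.2.2 = f₂ y.2.1 y.2.2 := by
      have e1 := (hx.2 y.2.2).2
      have e2 := (hy.2 x.2.1).1
      rw [← e1, e2]
    have hd := hC x hx.1 y hy.1 hne
    have h1 : (f₁ x.1, f₂ x.2.1 x.2.2) ∈ Omega f₁ f₂ x := omega_mem1 f₁ f₂ x x.1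
    have h2 : (f₁ x.1, f₂ x.2.1 x.2.2) ∈ Omega f₁ f₂ y := by
      rw [hs]; exact omega_mem1 f₁ f₂ y x.1
    exact (Finset.disjoint_left.mp hd h1) h2
  -- lower bounds on the size of Omega
  have key0 : ∀ x, C.card ≤ (Omega f₁ f₂ x).card := fun x =>
    hcard_img.trans ((hS_card x).symm.le.trans (Finset.card_le_card (hS_sub x)))
  have key1 : ∀ x, ¬ Deg x → C.card + 1 ≤ (Omega f₁ f₂ x).card := by
    intro x hx
    simp only [hDeg, not_forall] at hx
    obtain ⟨a, ha⟩ := hx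
    rw [not_and_or] at ha
    obtain ⟨e, he, hne⟩ : ∃ e : A × A, e ∈ Omega f₁ f₂ x ∧ e.2 ≠ f₂ x.2.1 x.2.2 := by
      rcases ha with h | h
      · exact ⟨(f₁ x.1, f₂ a x.2.2), omega_mem2 f₁ f₂ x a, h⟩
      · exact ⟨(f₁ x.1, f₂ x.2.1 a), omega_mem3 f₁ f₂ x a, h⟩
    have heS : e ∉ S x := by
      simp only [hS, mem_image, mem_univ, true_and]
      rintro ⟨b, -, rfl⟩
      exact hne rfl
    have hins : insert e (S x) ⊆ Omega f₁ f₂ x :=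
      Finset.insert_subset he (hS_sub x)
    calc C.card + 1 ≤ (S x).card + 1 := by
          rw [hS_card x]; exact Nat.add_le_add_right hcard_img 1
      _ = (insert e (S x)).card := (Finset.card_insert_of_notMem heS).symm
      _ ≤ (Omega f₁ f₂ x).card := Finset.card_le_card hins
  -- sum of sizes is at most |A|^2
  have hsum : ∑ x ∈ C, (Omega f₁ f₂ x).card ≤ Fintype.card A ^ 2 := by
    rw [← Finset.card_biUnion hC]
    calc (C.biUnion (Omega f₁ f₂)).card ≤ (univ : Finset (A × A)).card :=
          Finset.card_le_card (Finset.subset_univ _)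
      _ = Fintype.card A ^ 2 := by rw [Finset.card_univ, Fintype.card_prod, sq]
  -- lower bound on the sum
  have hlow : C.card * C.card + (C.filter fun x => ¬ Deg x).card
      ≤ ∑ x ∈ C, (Omega f₁ f₂ x).card := by
    have step : ∑ x ∈ C, (C.card + if Deg x then 0 else 1)
        ≤ ∑ x ∈ C, (Omega f₁ f₂ x).card := by
      apply Finset.sum_le_sum
      intro x hx
      by_cases h : Deg x
      · rw [if_pos h]
        simpa using key0 x
      · rw [if_neg h]
        exact key1 x h
    calc C.card * C.card + (C.filter fun x => ¬ Deg x).card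
        = ∑ x ∈ C, (C.card + if Deg x then 0 else 1) := by
          rw [Finset.sum_add_distrib, Finset.sum_const, smul_eq_mul,
            Finset.card_filter]
          congr 1
          apply Finset.sum_congr rfl
          intro x _
          by_cases h : Deg x <;> simp [h]
      _ ≤ _ := step
  have hsplit : (C.filter Deg).card + (C.filter fun x => ¬ Deg x).card = C.card :=
    Finset.card_filter_add_card_filter_not _
  have h1 : C.card ^ 2 + (C.filter fun x => ¬ Deg x).card ≤ Fintype.card A ^ 2 := by
    rw [sq]; exact le_trans hlow hsum
  set k := Fintype.card A ^ 2 with hk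
  set m := C.card ^ 2 with hm
  omega
end

section
/- Let A be a finite alphabet with |A| ≥ 2, f₁ : A → A, f₂ : A × A → A, and let C ⊆ A³ be unambiguous for the Diamond Network with these functions. Then |C| ≤ |A| − 1. -/
open Finset

lemma row_mem {A : Type*} [Fintype A] [DecidableEq A] (f₁ : A → A) (f₂ : A → A → A)
    (x : A × A × A) (a : A) : (f₁ a, f₂ x.2.1 x.2.2) ∈ Omega f₁ f₂ x := by
  simp only [Omega, Finset.mem_image, Finset.mem_filter, Finset.mem_univ, true_and]
  refine ⟨(a, x.2.1, x.2.2), ?_, rfl⟩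
  simp only [dH3]
  split_ifs <;> simp

lemma col2_mem {A : Type*} [Fintype A] [DecidableEq A] (f₁ : A → A) (f₂ : A → A → A)
    (x : A × A × A) (b : A) : (f₁ x.1, f₂ b x.2.2) ∈ Omega f₁ f₂ x := by
  simp only [Omega, Finset.mem_image, Finset.mem_filter, Finset.mem_univ, true_and]
  refine ⟨(x.1, b, x.2.2), ?_, rfl⟩
  simp only [dH3]
  split_ifs <;> simp

lemma col3_mem {A : Type*} [Fintype A] [DecidableEq A] (f₁ : A → A) (f₂ : A → A → A)
    (x : A × A × A) (b : A) : (f₁ x.1, f₂ x.2.1 b) ∈ Omega f₁ f₂ x := by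
  simp only [Omega, Finset.mem_image, Finset.mem_filter, Finset.mem_univ, true_and]
  refine ⟨(x.1, x.2.1, b), ?_, rfl⟩
  simp only [dH3]
  split_ifs <;> simp

theorem stmt8 {A : Type*} [Fintype A] [DecidableEq A] (hA : 2 ≤ Fintype.card A)
    (f₁ : A → A) (f₂ : A → A → A) (C : Finset (A × A × A))
    (hC : Unambiguous f₁ f₂ C) :
    C.card ≤ Fintype.card A - 1 := by
  classical
  set g : A × A × A → A := fun x => f₂ x.2.1 x.2.2 with hg
  -- g is injective on C
  have hinj : ∀ x ∈ C, ∀ y ∈ C, g x = g y → x = y := by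
    intro x hx y hy h
    by_contra hne
    have hd := hC x hx y hy hne
    have h1 : (f₁ x.1, g x) ∈ Omega f₁ f₂ x := row_mem f₁ f₂ x x.1
    have h2 : (f₁ x.1, g x) ∈ Omega f₁ f₂ y := by
      rw [h]; exact row_mem f₁ f₂ y x.1
    exact (Finset.disjoint_left.mp hd h1) h2
  have himg : (C.image g).card = C.card :=
    Finset.card_image_of_injOn (fun x hx y hy => hinj x hx y hy)
  have hcard : C.card ≤ Fintype.card A := by
    rw [← himg, ← Finset.card_univ]
    exact Finset.card_le_univ _
  by_contra hcon
  push_neg at hcon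
  have hCeq : C.card = Fintype.card A := by omega
  -- g is surjective from C onto A
  have hsurj : ∀ a : A, ∃ x ∈ C, g x = a := by
    have huniv : C.image g = Finset.univ := by
      apply Finset.eq_univ_of_card
      rw [himg, hCeq]
    intro a
    have : a ∈ C.image g := by rw [huniv]; exact Finset.mem_univ a
    simpa using this
  -- key: for x ∈ C, f₂ is constant along both coordinates through (x₂,x₃)
  have key2 : ∀ x ∈ C, ∀ b : A, f₂ b x.2.2 = g x := by
    intro x hx b
    obtain ⟨y, hy, hgy⟩ := hsurj (f₂ b x.2.2)
    by_cases hxy : y = x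
    · rw [hxy] at hgy; exact hgy.symm
    · exfalso
      have hd := hC x hx y hy (fun h => hxy h.symm)
      have h1 : (f₁ x.1, f₂ b x.2.2) ∈ Omega f₁ f₂ x := col2_mem f₁ f₂ x b
      have h2 : (f₁ x.1, f₂ b x.2.2) ∈ Omega f₁ f₂ y := by
        rw [← hgy]; exact row_mem f₁ f₂ y x.1
      exact (Finset.disjoint_left.mp hd h1) h2
  have key3 : ∀ x ∈ C, ∀ b : A, f₂ x.2.1 b = g x := by
    intro x hx b
    obtain ⟨y, hy, hgy⟩ := hsurj (f₂ x.2.1 b)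
    by_cases hxy : y = x
    · rw [hxy] at hgy; exact hgy.symm
    · exfalso
      have hd := hC x hx y hy (fun h => hxy h.symm)
      have h1 : (f₁ x.1, f₂ x.2.1 b) ∈ Omega f₁ f₂ x := col3_mem f₁ f₂ x b
      have h2 : (f₁ x.1, f₂ x.2.1 b) ∈ Omega f₁ f₂ y := by
        rw [← hgy]; exact row_mem f₁ f₂ y x.1
      exact (Finset.disjoint_left.mp hd h1) h2
  -- get two distinct codewords
  have h2card : 1 < C.card := by omega
  obtain ⟨x, hx, y, hy, hxy⟩ := Finset.one_lt_card.mp h2card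
  have e1 : f₂ x.2.1 y.2.2 = g x := key3 x hx y.2.2
  have e2 : f₂ x.2.1 y.2.2 = g y := key2 y hy x.2.1
  exact hxy (hinj x hx y hy (e1.symm.trans e2))
end

section
/- Let A be a finite alphabet with |A| ≥ 2 and fix a symbol * ∈ A. Define f₁ : A → A as the identity, and f₂ : A × A → A by f₂(a,b) = a if a = b and a ≠ *, and f₂(a,b) = * otherwise. Let C = {(a,a,a) : a ∈ A, a ≠ *}. Then C is unambiguous for the Diamond Network with functions f₁, f₂; in particular there exists an unambiguous code of size |A| − 1. -/
open Finset

lemma omega_mem_char {A : Type*} [Fintype A] [DecidableEq A] (star a : A)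
    (ha : a ≠ star) (z : A × A)
    (hz : z ∈ Omega (fun a => a) (fun a b => if a = b ∧ a ≠ star then a else star) (a, a, a)) :
    z.2 = a ∨ (z.1 = a ∧ z.2 = star) := by
  simp only [Omega, mem_image, mem_filter, mem_univ, true_and] at hz
  obtain ⟨x', hd, hzx⟩ := hz
  subst hzx
  simp only [dH3] at hd
  by_cases h1 : x'.1 = a <;> by_cases h2 : x'.2.1 = a <;> by_cases h3 : x'.2.2 = a <;>
    simp [h1, h2, h3] at hd ⊢ <;> simp_all <;> tauto

theorem stmt9 {A : Type*} [Fintype A] [DecidableEq A] (hA : 2 ≤ Fintype.card A)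
    (star : A) :
    Unambiguous (fun a => a) (fun a b => if a = b ∧ a ≠ star then a else star)
        ((Finset.univ.erase star).image fun a => (a, a, a)) ∧
    ((Finset.univ.erase star).image fun a : A => (a, a, a)).card = Fintype.card A - 1 := by
  constructor
  · intro x hx y hy hxy
    simp only [mem_image, mem_erase, mem_univ, and_true] at hx hy
    obtain ⟨a, ha, rfl⟩ := hx
    obtain ⟨b, hb, rfl⟩ := hy
    have hab : a ≠ b := by intro h; exact hxy (by rw [h])
    rw [Finset.disjoint_left]
    intro z hza hzb
    have h1 := omega_mem_char star a ha z hza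
    have h2 := omega_mem_char star b hb z hzb
    rcases h1 with h1 | ⟨h1a, h1b⟩ <;> rcases h2 with h2 | ⟨h2a, h2b⟩
    · exact hab (h1.symm.trans h2)
    · exact ha (h2b ▸ h1).symm
    · exact hb (h1b ▸ h2).symm
    · exact hab (h1a.symm.trans h2a)
  · rw [Finset.card_image_of_injective _ (fun a b h => (Prod.mk.injEq ..).mp h |>.1),
      Finset.card_erase_of_mem (mem_univ _), Finset.card_univ]
end

section
/- Let A be a finite alphabet with |A| ≥ 2 and fix * ∈ A. Define g : A × A → A by g(a,b) = a if a = b, and g(a,b) = * otherwise. For x ∈ A⁴, let Ω(x) = {(g(x₁',x₂'), g(x₃',x₄')) : x' ∈ A⁴ with dH(x', x) ≤ 1}. Then the repetition code C = {(a,a,a,a) : a ∈ A} satisfies Ω(x) ∩ Ω(y) = ∅ for all distinct x, y ∈ C. -/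
open Finset

/-- Hamming distance on quadruples. -/
def dH4 {A : Type*} [DecidableEq A] (x y : A × A × A × A) : ℕ :=
  (if x.1 = y.1 then 0 else 1) + (if x.2.1 = y.2.1 then 0 else 1) +
    (if x.2.2.1 = y.2.2.1 then 0 else 1) + (if x.2.2.2 = y.2.2.2 then 0 else 1)

/-- Output sets at the terminal of the Mirrored Diamond Network with node function `g`. -/
def OmegaM {A : Type*} [Fintype A] [DecidableEq A] (g : A → A → A) (x : A × A × A × A) :
    Finset (A × A) :=
  (Finset.univ.filter fun x' : A × A × A × A => dH4 x' x ≤ 1).image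
    fun x' => (g x'.1 x'.2.1, g x'.2.2.1 x'.2.2.2)

lemma mem_omega_rep {A : Type*} [Fintype A] [DecidableEq A] (star a : A) (p : A × A)
    (hp : p ∈ OmegaM (fun u v => if u = v then u else star) (a, a, a, a)) :
    p = (a, a) ∨ p = (a, star) ∨ p = (star, a) := by
  simp only [OmegaM, mem_image, mem_filter, mem_univ, true_and] at hp
  obtain ⟨⟨x1, x2, x3, x4⟩, hd, he⟩ := hp
  simp only [dH4] at hd
  subst he
  have key : (x1 = a ∧ x2 = a) ∨ (x3 = a ∧ x4 = a) := by
    by_cases h1 : x1 = a <;> by_cases h2 : x2 = a <;> by_cases h3 : x3 = a <;>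
      by_cases h4 : x4 = a <;> simp [h1, h2, h3, h4] at hd ⊢
  simp only [Prod.mk.injEq]
  rcases key with ⟨h1, h2⟩ | ⟨h3, h4⟩
  · rw [h1, h2] at hd ⊢
    simp only [if_pos rfl, add_zero, zero_add] at hd
    by_cases h3 : x3 = a <;> by_cases h4 : x4 = a
    · simp [h3, h4]
    · have h4' : ¬ a = x4 := fun h => h4 h.symm
      simp [h3, h4, h4']
    · simp [h3, h4]
    · simp [h3, h4] at hd
  · rw [h3, h4] at hd ⊢
    simp only [if_pos rfl, add_zero, zero_add] at hd
    by_cases h1 : x1 = a <;> by_cases h2 : x2 = a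
    · simp [h1, h2]
    · have h2' : ¬ a = x2 := fun h => h2 h.symm
      simp [h1, h2, h2']
    · simp [h1, h2]
    · simp [h1, h2] at hd

theorem stmt11 {A : Type*} [Fintype A] [DecidableEq A] (hA : 2 ≤ Fintype.card A)
    (star : A) :
    ∀ a b : A, a ≠ b →
      Disjoint (OmegaM (fun u v => if u = v then u else star) (a, a, a, a))
        (OmegaM (fun u v => if u = v then u else star) (b, b, b, b)) := by
  intro a b hab
  rw [Finset.disjoint_left]
  intro p hpa hpb
  have Ha := mem_omega_rep star a p hpa
  have Hb := mem_omega_rep star b p hpb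
  clear hpa hpb hA
  rcases Ha with h | h | h <;> rcases Hb with h' | h' | h' <;>
    rw [h, Prod.mk.injEq] at h' <;> exact hab (by
      obtain ⟨u, v⟩ := h'
      first
        | exact u
        | exact v
        | exact u.trans v.symm
        | exact (v.symm.trans u)
        | exact u.symm ▸ v
        | grind)
end

section
/- Let A be a finite alphabet, f₁ : A → A, f₂ : A × A → A, and suppose C ⊆ A³ is unambiguous for the Diamond Network with these functions and |C| ≥ 2. Then for every codeword x ∈ C except possibly one, the set {f₂(x₂',x₃') : dH((x₂',x₃'),(x₂,x₃)) ≤ 1} has cardinality at least 2, and consequently Σ_{x∈C} |Ω(x)| ≥ |C|² + |C| − 1. -/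
open Finset

/-- Hamming distance on pairs. -/
def dH2 {A : Type*} [DecidableEq A] (p q : A × A) : ℕ :=
  (if p.1 = q.1 then 0 else 1) + (if p.2 = q.2 then 0 else 1)

/-- Possible symbols exiting the lower vertex V₂. -/
def omegaLow {A : Type*} [Fintype A] [DecidableEq A] (f₂ : A → A → A) (x : A × A × A) :
    Finset A :=
  (Finset.univ.filter fun p : A × A => dH2 p (x.2.1, x.2.2) ≤ 1).image fun p => f₂ p.1 p.2

lemma mem_Omega_of {A : Type*} [Fintype A] [DecidableEq A] (f₁ : A → A) (f₂ : A → A → A)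
    {x : A × A × A} (x' : A × A × A) (h : dH3 x' x ≤ 1) :
    (f₁ x'.1, f₂ x'.2.1 x'.2.2) ∈ Omega f₁ f₂ x :=
  Finset.mem_image.mpr ⟨x', Finset.mem_filter.mpr ⟨Finset.mem_univ _, h⟩, rfl⟩

lemma mem_omegaLow_of {A : Type*} [Fintype A] [DecidableEq A] (f₂ : A → A → A)
    {x : A × A × A} (p : A × A) (h : dH2 p (x.2.1, x.2.2) ≤ 1) :
    f₂ p.1 p.2 ∈ omegaLow f₂ x :=
  Finset.mem_image.mpr ⟨p, Finset.mem_filter.mpr ⟨Finset.mem_univ _, h⟩, rfl⟩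

lemma f1_ne {A : Type*} [Fintype A] [DecidableEq A] {f₁ : A → A} {f₂ : A → A → A}
    {C : Finset (A × A × A)} (hC : Unambiguous f₁ f₂ C) {x y : A × A × A}
    (hx : x ∈ C) (hy : y ∈ C) (hxy : x ≠ y) : f₁ x.1 ≠ f₁ y.1 := by
  intro h
  have h1 : (f₁ x.1, f₂ x.2.1 y.2.2) ∈ Omega f₁ f₂ x :=
    mem_Omega_of f₁ f₂ (x.1, x.2.1, y.2.2) (by simp [dH3]; split_ifs <;> omega)
  have h2 : (f₁ y.1, f₂ x.2.1 y.2.2) ∈ Omega f₁ f₂ y :=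
    mem_Omega_of f₁ f₂ (y.1, x.2.1, y.2.2) (by simp [dH3]; split_ifs <;> omega)
  rw [h] at h1
  exact Finset.disjoint_left.mp (hC x hx y hy hxy) h1 h2

lemma omegaLow_self {A : Type*} [Fintype A] [DecidableEq A] (f₂ : A → A → A)
    (x : A × A × A) : f₂ x.2.1 x.2.2 ∈ omegaLow f₂ x :=
  mem_omegaLow_of f₂ (x.2.1, x.2.2) (by simp [dH2])

lemma not_both_small {A : Type*} [Fintype A] [DecidableEq A] {f₁ : A → A} {f₂ : A → A → A}
    {C : Finset (A × A × A)} (hC : Unambiguous f₁ f₂ C) {x y : A × A × A}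
    (hx : x ∈ C) (hy : y ∈ C) (hxy : x ≠ y)
    (h1 : (omegaLow f₂ x).card ≤ 1) (h2 : (omegaLow f₂ y).card ≤ 1) : False := by
  have e1 : f₂ x.2.1 x.2.2 = f₂ x.2.1 y.2.2 :=
    Finset.card_le_one.mp h1 _ (omegaLow_self f₂ x) _
      (mem_omegaLow_of f₂ (x.2.1, y.2.2) (by simp [dH2]; split_ifs <;> omega))
  have e2 : f₂ y.2.1 y.2.2 = f₂ x.2.1 y.2.2 :=
    Finset.card_le_one.mp h2 _ (omegaLow_self f₂ y) _
      (mem_omegaLow_of f₂ (x.2.1, y.2.2) (by simp [dH2]; split_ifs <;> omega))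
  have m1 : (f₁ y.1, f₂ x.2.1 x.2.2) ∈ Omega f₁ f₂ x :=
    mem_Omega_of f₁ f₂ (y.1, x.2.1, x.2.2) (by simp [dH3]; split_ifs <;> omega)
  have m2 : (f₁ y.1, f₂ y.2.1 y.2.2) ∈ Omega f₁ f₂ y :=
    mem_Omega_of f₁ f₂ (y.1, y.2.1, y.2.2) (by simp [dH3])
  rw [e1] at m1
  rw [e2] at m2
  exact Finset.disjoint_left.mp (hC x hx y hy hxy) m1 m2

lemma card_Omega_ge {A : Type*} [Fintype A] [DecidableEq A] {f₁ : A → A} {f₂ : A → A → A}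
    {C : Finset (A × A × A)} (hC : Unambiguous f₁ f₂ C) {x : A × A × A} (hx : x ∈ C) :
    C.card + (omegaLow f₂ x).card ≤ (Omega f₁ f₂ x).card + 1 := by
  set S1 : Finset (A × A) := C.image (fun z : A × A × A => (f₁ z.1, f₂ x.2.1 x.2.2)) with hS1def
  set S2 : Finset (A × A) := (omegaLow f₂ x).image (fun s => (f₁ x.1, s)) with hS2def
  have hS1 : S1.card = C.card := by
    apply Finset.card_image_of_injOn
    intro a ha b hb hab
    by_contra hne
    exact f1_ne hC ha hb hne (congrArg Prod.fst hab)
  have hS2 : S2.card = (omegaLow f₂ x).card := by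
    apply Finset.card_image_of_injOn
    intro a _ b _ hab
    exact congrArg Prod.snd hab
  have hsub : S1 ∪ S2 ⊆ Omega f₁ f₂ x := by
    intro u hu
    rcases Finset.mem_union.mp hu with hu | hu
    · obtain ⟨z, hz, rfl⟩ := Finset.mem_image.mp hu
      exact mem_Omega_of f₁ f₂ (z.1, x.2.1, x.2.2) (by simp [dH3]; split_ifs <;> omega)
    · obtain ⟨s, hs, rfl⟩ := Finset.mem_image.mp hu
      obtain ⟨p, hp, rfl⟩ := Finset.mem_image.mp hs
      have hp' : dH2 p (x.2.1, x.2.2) ≤ 1 := (Finset.mem_filter.mp hp).2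
      exact mem_Omega_of f₁ f₂ (x.1, p.1, p.2)
        (by simp only [dH3, dH2] at hp' ⊢; split_ifs at hp' ⊢ <;> omega)
  have hinter : (S1 ∩ S2).card ≤ 1 := by
    have : S1 ∩ S2 ⊆ {(f₁ x.1, f₂ x.2.1 x.2.2)} := by
      intro u hu
      obtain ⟨hu1, hu2⟩ := Finset.mem_inter.mp hu
      obtain ⟨z, _, rfl⟩ := Finset.mem_image.mp hu1
      obtain ⟨s, _, he⟩ := Finset.mem_image.mp hu2
      have : f₁ x.1 = f₁ z.1 := congrArg Prod.fst he
      simp [← this]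
    calc (S1 ∩ S2).card ≤ _ := Finset.card_le_card this
    _ = 1 := Finset.card_singleton _
  have hcu : (S1 ∪ S2).card + (S1 ∩ S2).card = S1.card + S2.card :=
    Finset.card_union_add_card_inter S1 S2
  have := Finset.card_le_card hsub
  omega

theorem stmt13 {A : Type*} [Fintype A] [DecidableEq A]
    (f₁ : A → A) (f₂ : A → A → A) (C : Finset (A × A × A))
    (hC : Unambiguous f₁ f₂ C) (hsize : 2 ≤ C.card) :
    (∃ x₀ : A × A × A, ∀ x ∈ C, x ≠ x₀ → 2 ≤ (omegaLow f₂ x).card) ∧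
    C.card ^ 2 + C.card - 1 ≤ ∑ x ∈ C, (Omega f₁ f₂ x).card := by
  have hne : C.Nonempty := Finset.card_pos.mp (by omega)
  have hone : ∀ x : A × A × A, 1 ≤ (omegaLow f₂ x).card := fun x =>
    Finset.card_pos.mpr ⟨_, omegaLow_self f₂ x⟩
  have hex : ∃ x₀ : A × A × A, ∀ x ∈ C, x ≠ x₀ → 2 ≤ (omegaLow f₂ x).card := by
    by_cases h : ∃ x ∈ C, (omegaLow f₂ x).card ≤ 1
    · obtain ⟨x₀, hx₀, hx₀c⟩ := h
      refine ⟨x₀, fun x hx hne2 => ?_⟩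
      by_contra hlt
      exact not_both_small hC hx hx₀ hne2 (by omega) hx₀c
    · push_neg at h
      exact ⟨hne.choose, fun x hx _ => h x hx⟩
  refine ⟨hex, ?_⟩
  obtain ⟨x₀, hx₀⟩ := hex
  -- lower bound on the sum of omegaLow cards
  have ht : 2 * C.card ≤ (∑ x ∈ C, (omegaLow f₂ x).card) + 1 := by
    by_cases hmem : x₀ ∈ C
    · have hsplit : (omegaLow f₂ x₀).card + ∑ x ∈ C.erase x₀, (omegaLow f₂ x).card
          = ∑ x ∈ C, (omegaLow f₂ x).card := Finset.add_sum_erase C (fun x => (omegaLow f₂ x).card) hmem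
      have herase : (C.erase x₀).card * 2 ≤ ∑ x ∈ C.erase x₀, (omegaLow f₂ x).card := by
        rw [Finset.card_erase_of_mem hmem]
        calc (C.card - 1) * 2 = ∑ _x ∈ C.erase x₀, 2 := by
              rw [Finset.sum_const, Finset.card_erase_of_mem hmem, smul_eq_mul]
        _ ≤ _ := Finset.sum_le_sum fun x hx =>
              hx₀ x (Finset.mem_of_mem_erase hx) (Finset.ne_of_mem_erase hx)
      have h1 := hone x₀
      have hcc : (C.erase x₀).card = C.card - 1 := Finset.card_erase_of_mem hmem
      omega
    · have : C.card * 2 ≤ ∑ x ∈ C, (omegaLow f₂ x).card := by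
        calc C.card * 2 = ∑ _x ∈ C, 2 := by rw [Finset.sum_const, smul_eq_mul]
        _ ≤ _ := Finset.sum_le_sum fun x hx => hx₀ x hx (fun he => hmem (he ▸ hx))
      omega
  have hsum : C.card * C.card + ∑ x ∈ C, (omegaLow f₂ x).card
      ≤ (∑ x ∈ C, (Omega f₁ f₂ x).card) + C.card := by
    calc C.card * C.card + ∑ x ∈ C, (omegaLow f₂ x).card
        = ∑ x ∈ C, (C.card + (omegaLow f₂ x).card) := by
          rw [Finset.sum_add_distrib, Finset.sum_const, smul_eq_mul]
    _ ≤ ∑ x ∈ C, ((Omega f₁ f₂ x).card + 1) := Finset.sum_le_sum fun x hx => card_Omega_ge hC hx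
    _ = (∑ x ∈ C, (Omega f₁ f₂ x).card) + C.card := by
          rw [Finset.sum_add_distrib, Finset.sum_const, smul_eq_mul, mul_one]
  have hpow : C.card ^ 2 = C.card * C.card := sq C.card
  set t := ∑ x ∈ C, (omegaLow f₂ x).card
  set s := ∑ x ∈ C, (Omega f₁ f₂ x).card
  omega
end

section
/- Let A be a finite alphabet with |A| ≥ 2, f₁ : A → A, f₂ : A × A → A, and let C ⊆ A³ be unambiguous for the Diamond Network. Suppose x, y ∈ C are distinct with ω(x) = {f₂(x₂,x₃)} a singleton and ω(y) = {f₂(y₂,y₃)} a singleton, where ω(z) = {f₂(z₂',z₃') : dH((z₂',z₃'),(z₂,z₃)) ≤ 1}. Then f₂(x₂,x₃) = f₂(y₂,y₃), and Ω(x) ∩ Ω(y) ≠ ∅, a contradiction; hence no two such codewords exist. -/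
open Finset

lemma mem_omegaLow {A : Type*} [Fintype A] [DecidableEq A] (f₂ : A → A → A)
    (x : A × A × A) (p : A × A) (h : dH2 p (x.2.1, x.2.2) ≤ 1) :
    f₂ p.1 p.2 ∈ omegaLow f₂ x := by
  simp only [omegaLow, Finset.mem_image, Finset.mem_filter, Finset.mem_univ, true_and]
  exact ⟨p, h, rfl⟩

theorem stmt18 {A : Type*} [Fintype A] [DecidableEq A] (hA : 2 ≤ Fintype.card A)
    (f₁ : A → A) (f₂ : A → A → A) (C : Finset (A × A × A))
    (hC : Unambiguous f₁ f₂ C) (x y : A × A × A) (hx : x ∈ C) (hy : y ∈ C) (hxy : x ≠ y)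
    (hox : omegaLow f₂ x = {f₂ x.2.1 x.2.2}) (hoy : omegaLow f₂ y = {f₂ y.2.1 y.2.2}) :
    f₂ x.2.1 x.2.2 = f₂ y.2.1 y.2.2 ∧ (Omega f₁ f₂ x ∩ Omega f₁ f₂ y).Nonempty ∧ False := by
  have h1 : f₂ x.2.1 y.2.2 ∈ omegaLow f₂ x := by
    apply mem_omegaLow f₂ x (x.2.1, y.2.2)
    simp only [dH2]; split_ifs <;> omega
  have h2 : f₂ x.2.1 y.2.2 ∈ omegaLow f₂ y := by
    apply mem_omegaLow f₂ y (x.2.1, y.2.2)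
    simp only [dH2]; split_ifs <;> omega
  rw [hox, Finset.mem_singleton] at h1
  rw [hoy, Finset.mem_singleton] at h2
  have heq : f₂ x.2.1 x.2.2 = f₂ y.2.1 y.2.2 := h1.symm.trans h2
  have hx' : (f₁ y.1, f₂ x.2.1 x.2.2) ∈ Omega f₁ f₂ x := by
    have := mem_Omega f₁ f₂ x (y.1, x.2.1, x.2.2) (by simp only [dH3]; split_ifs <;> omega)
    simpa using this
  have hy' : (f₁ y.1, f₂ x.2.1 x.2.2) ∈ Omega f₁ f₂ y := by
    have := mem_Omega f₁ f₂ y (y.1, y.2.1, y.2.2) (by simp only [dH3]; split_ifs <;> omega)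
    rw [heq]
    simpa using this
  have hne : (Omega f₁ f₂ x ∩ Omega f₁ f₂ y).Nonempty :=
    ⟨_, Finset.mem_inter.2 ⟨hx', hy'⟩⟩
  have : False := by
    have := hC x hx y hy hxy
    exact (Finset.disjoint_left.1 this hx') hy'
  exact ⟨heq, hne, this⟩
end
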